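/- Let k ≥ 1 and let G be an antisymmetric k×k real matrix (Gᵀ = −G). Let S be the upper triangular k×k matrix with S_{ii} = 1, S_{ij} = −G_{ij} for i < j, and S_{ij} = 0 for i > j, so that Sᵀ − S = G. For 0 ≤ j ≤ k−1 set R_j = 1 − G·E_{jj}, where E_{jj} is the matrix with 1 in position (j,j) and 0 elsewhere. Then the composition of all the pseudo-reflexions gives the Seifert form: R_{k−1} · R_{k−2} ⋯ R_1 · R_0 = S · (Sᵀ)⁻¹. -/

import Mathlib

open Matrix

/-- Let `G` be an antisymmetric real `k × k` matrix, and let `S` be upper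
triangular with unit diagonal and `S i j = -G i j` for `i < j` (so `Sᵀ - S = G`).
With `R j = 1 - G * E_{jj}`, the composition of all the pseudo-reflexions gives the
Seifert form: `R_{k-1} ⋯ R_0 = S * (Sᵀ)⁻¹`. -/
theorem stmt9 (k : ℕ) (hk : 1 ≤ k)
    (G : Matrix (Fin k) (Fin k) ℝ)
    (hanti : Gᵀ = -G)
    (S : Matrix (Fin k) (Fin k) ℝ)
    (hS : S = Matrix.of fun i j : Fin k =>
      if i = j then 1 else if i < j then -G i j else 0)
    (R : Fin k → Matrix (Fin k) (Fin k) ℝ)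
    (hR : ∀ j, R j = 1 - G * Matrix.single j j 1) :
    ((List.finRange k).reverse.map R).prod = S * (Sᵀ)⁻¹ := by
  have hGanti : ∀ i j : Fin k, G j i = -G i j := by
    intro i j
    have := congrFun (congrFun hanti i) j
    simpa [Matrix.transpose_apply, Matrix.neg_apply] using this
  -- D m : diagonal projection onto first m coordinates
  set D : ℕ → Matrix (Fin k) (Fin k) ℝ :=
    fun m => Matrix.of fun i j => if i = j ∧ (i : ℕ) < m then (1 : ℝ) else 0 with hD
  have hGD : ∀ (m : ℕ) (i j : Fin k),
      (G * D m) i j = if (j : ℕ) < m then G i j else 0 := by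
    intro m i j
    simp only [Matrix.mul_apply, hD, Matrix.of_apply]
    rw [Finset.sum_eq_single j]
    · by_cases h : (j : ℕ) < m <;> simp [h]
    · intro b _ hb
      simp [hb]
    · simp
  -- the row m of (Sᵀ - G * D m) is the standard basis row
  have hrow : ∀ (m : Fin k) (j : Fin k),
      (Sᵀ - G * D (m : ℕ)) m j = if m = j then 1 else 0 := by
    intro m j
    rw [Matrix.sub_apply, Matrix.transpose_apply, hGD]
    rcases lt_trichotomy j m with h | h | h
    · have h1 : ¬ j = m := Fin.ne_of_lt h
      have h2 : ¬ m = j := (Fin.ne_of_lt h).symm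
      have h3 : (j : ℕ) < (m : ℕ) := h
      simp [hS, h1, h2, h, h3, hGanti m j]
    · subst h
      simp [hS]
    · have h1 : ¬ j = m := (Fin.ne_of_lt h).symm
      have h2 : ¬ m = j := Fin.ne_of_lt h
      have h3 : ¬ (j : ℕ) < (m : ℕ) := not_lt_of_gt h
      have h4 : ¬ j < m := not_lt_of_gt h
      simp [hS, h1, h2, h3, h4]
  -- key: E_mm * (Sᵀ - G * D m) = E_mm
  have hkey : ∀ m : Fin k,
      Matrix.single m m (1:ℝ) * (Sᵀ - G * D (m : ℕ))
        = Matrix.single m m 1 := by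
    intro m
    ext i j
    by_cases hi : i = m
    · subst hi
      rw [Matrix.single_mul_apply_same, hrow]
      by_cases hj : i = j <;> simp [hj, Matrix.single]
    · rw [Matrix.single_mul_apply_of_ne (c := (1:ℝ)) m m i j hi]
      simp [Matrix.single, Ne.symm hi]
  -- partial products
  have main : ∀ m : ℕ, m ≤ k →
      (((List.finRange k).take m).reverse.map R).prod * Sᵀ = Sᵀ - G * D m := by
    intro m
    induction m with
    | zero =>
      intro _
      have : G * D 0 = 0 := by
        ext i j
        rw [hGD]
        simp
      simp [this]
    | succ n ih =>
      intro hn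
      have hn' : n ≤ k := Nat.le_of_succ_le hn
      have hnk : n < (List.finRange k).length := by simp; omega
      set e : Fin k := ⟨n, by omega⟩ with he
      have htake : (List.finRange k).take (n+1)
          = (List.finRange k).take n ++ [e] := by
        rw [List.take_succ]
        congr 1
        rw [List.getElem?_eq_getElem hnk]
        simp [List.getElem_finRange, he]
      rw [htake]
      simp only [List.reverse_append, List.reverse_cons, List.reverse_nil, List.nil_append,
        List.map_cons, List.map_append, List.prod_cons, List.singleton_append]
      rw [mul_assoc, ih hn', hR]
      have hkey' : Matrix.single e e (1:ℝ) * (Sᵀ - G * D n)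
          = Matrix.single e e 1 := by
        have := hkey e
        simpa [he] using this
      have hDstep : D (n+1) = D n + Matrix.single e e 1 := by
        ext i j
        simp only [hD, Matrix.of_apply, Matrix.add_apply, Matrix.single, Matrix.of_apply]
        by_cases hij : i = j
        · subst hij
          by_cases h1 : (i : ℕ) < n
          · have h2 : (i : ℕ) < n + 1 := by omega
            have h3 : ¬ e = i := by
              intro h; rw [← h] at h1; simp [he] at h1
            simp [h1, h2, h3]
          · by_cases h2 : (i : ℕ) < n + 1
            · have h3 : e = i := by
                apply Fin.ext; simp [he]; omega
              simp [h1, h2, h3]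
            · have h3 : ¬ e = i := by
                intro h; rw [← h] at h2; simp [he] at h2
              simp [h1, h2, h3]
        · have h3 : ¬ (e = i ∧ e = j) := by
            rintro ⟨rfl, rfl⟩; exact hij rfl
          simp [hij, h3]
      have hfact : (1 - G * Matrix.single e e 1) * (Sᵀ - G * D n)
          = Sᵀ - G * D n - G * (Matrix.single e e 1 * (Sᵀ - G * D n)) := by
        rw [sub_mul, one_mul, mul_assoc]
      rw [hfact, hkey', hDstep, mul_add]
      abel
  have hfull := main k le_rfl
  have htk : (List.finRange k).take k = List.finRange k :=
    List.take_of_length_le (by simp)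
  rw [htk] at hfull
  -- identify Sᵀ - G * D k with S
  have hDk : G * D k = G := by
    ext i j
    rw [hGD]
    simp [j.isLt]
  rw [hDk] at hfull
  have hSSt : Sᵀ - G = S := by
    ext i j
    simp only [Matrix.sub_apply, Matrix.transpose_apply, hS, Matrix.of_apply]
    rcases lt_trichotomy i j with h | h | h
    · have h1 : ¬ j = i := (Fin.ne_of_lt h).symm
      have h2 : ¬ i = j := Fin.ne_of_lt h
      have h3 : ¬ j < i := not_lt_of_gt h
      simp [h1, h2, h3, h, hGanti i j]
    · subst h
      have : G i i = 0 := by have := hGanti i i; linarith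
      simp [this]
    · have h1 : ¬ j = i := Fin.ne_of_lt h
      have h2 : ¬ i = j := (Fin.ne_of_lt h).symm
      have h3 : ¬ i < j := not_lt_of_gt h
      simp [h1, h2, h3, h, hGanti i j]
  rw [hSSt] at hfull
  -- Sᵀ is invertible: det = 1
  have hdetS : S.det = 1 := by
    have hbt : S.BlockTriangular id := by
      intro i j hij
      simp only [id] at hij
      have h1 : ¬ i = j := Fin.ne_of_gt hij
      have h2 : ¬ i < j := not_lt_of_gt hij
      simp [hS, h1, h2]
    rw [Matrix.det_of_upperTriangular hbt]
    apply Finset.prod_eq_one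
    intro i _
    simp [hS]
  have hdetSt : (Sᵀ).det = 1 := by rw [Matrix.det_transpose]; exact hdetS
  have hinv : Sᵀ * (Sᵀ)⁻¹ = 1 :=
    Matrix.mul_nonsing_inv _ (by rw [hdetSt]; exact isUnit_one)
  calc ((List.finRange k).reverse.map R).prod
      = ((List.finRange k).reverse.map R).prod * (Sᵀ * (Sᵀ)⁻¹) := by rw [hinv, mul_one]
    _ = (((List.finRange k).reverse.map R).prod * Sᵀ) * (Sᵀ)⁻¹ := by rw [mul_assoc]
    _ = S * (Sᵀ)⁻¹ := by rw [hfull]
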